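/- arXiv:2001.07211 — 2 statements merged into one kernel-verified Lean document; each statement's English description precedes it below -/
import Mathlib

section
/- With respect to the standard symplectic form ⟨x,y⟩ = x_1 y_3 + x_2 y_4 - x_3 y_1 - x_4 y_2 on Q^4, the subspaces W_att = span{A+, A-} and W_ell = span{E+, E-} are symplectic-orthogonal complements of each other, where A+ = (16,-60,0,5), A- = (0,0,2,1), E+ = (6,-12,0,1), E- = (-1,2,-5/7,-5/14). -/
def sympl (x y : Fin 4 → ℚ) : ℚ := x 0 * y 2 + x 1 * y 3 - x 2 * y 0 - x 3 * y 1

def Aplus : Fin 4 → ℚ := ![16, -60, 0, 5]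
def Aminus : Fin 4 → ℚ := ![0, 0, 2, 1]
def Eplus : Fin 4 → ℚ := ![6, -12, 0, 1]
def Eminus : Fin 4 → ℚ := ![-1, 2, -5/7, -5/14]

def Watt : Submodule ℚ (Fin 4 → ℚ) := Submodule.span ℚ {Aplus, Aminus}
def Well : Submodule ℚ (Fin 4 → ℚ) := Submodule.span ℚ {Eplus, Eminus}

theorem symplectic_orthogonal_complements :
    (∀ y, y ∈ Well ↔ ∀ x ∈ Watt, sympl x y = 0) ∧
    (∀ y, y ∈ Watt ↔ ∀ x ∈ Well, sympl x y = 0) := by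
  constructor
  · intro y
    constructor
    · intro hy x hx
      rw [Well, Submodule.mem_span_pair] at hy
      rw [Watt, Submodule.mem_span_pair] at hx
      obtain ⟨s, t, rfl⟩ := hy
      obtain ⟨u, v, rfl⟩ := hx
      simp [sympl, Aplus, Aminus, Eplus, Eminus]
      ring
    · intro h
      have h1 := h Aplus (Submodule.subset_span (by simp))
      have h2 := h Aminus (Submodule.subset_span (by simp))
      simp [sympl, Aplus, Aminus] at h1 h2
      rw [Well, Submodule.mem_span_pair]
      refine ⟨(y 0 - 7 * y 2 / 5) / 6, -7 * y 2 / 5, ?_⟩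
      funext i
      fin_cases i <;>
        simp [Eplus, Eminus] <;> field_simp <;> linarith
  · intro y
    constructor
    · intro hy x hx
      rw [Watt, Submodule.mem_span_pair] at hy
      rw [Well, Submodule.mem_span_pair] at hx
      obtain ⟨s, t, rfl⟩ := hy
      obtain ⟨u, v, rfl⟩ := hx
      simp [sympl, Aplus, Aminus, Eplus, Eminus]
      ring
    · intro h
      have h1 := h Eplus (Submodule.subset_span (by simp))
      have h2 := h Eminus (Submodule.subset_span (by simp))
      simp [sympl, Eplus, Eminus] at h1 h2
      rw [Watt, Submodule.mem_span_pair]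
      refine ⟨y 0 / 16, y 2 / 2, ?_⟩
      funext i
      fin_cases i <;>
        simp [Aplus, Aminus] <;> field_simp <;> linarith
end

section
/- The fourth-order differential operator D = θ^4 - φ(35θ^4 + 70θ^3 + 63θ^2 + 28θ + 5) + φ^2(θ+1)^2(259θ^2 + 518θ + 285) - 225φ^3(θ+1)^2(θ+2)^2, with θ = φ d/dφ, applied to the formal power series π_0 = Σ_{n≥0} a_n φ^n with a_n = Σ_{i+j+k+l+m=n} (n!/(i!j!k!l!m!))^2, gives zero. -/
open PowerSeries

/-- The Euler operator θ = φ d/dφ on formal power series. -/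
noncomputable def theta (f : PowerSeries ℚ) : PowerSeries ℚ :=
  PowerSeries.mk fun n => (n : ℚ) * PowerSeries.coeff n f

/-- The coefficients a_n = Σ_{i+j+k+l+m=n} (n!/(i!j!k!l!m!))². -/
noncomputable def a (n : ℕ) : ℚ :=
  ∑ x ∈ Finset.Nat.antidiagonalTuple 5 n, ((Nat.multinomial Finset.univ x : ℚ)) ^ 2

/-- The holomorphic canonical period π₀ = Σ a_n φⁿ. -/
noncomputable def pi0 : PowerSeries ℚ := PowerSeries.mk a

/-- The Picard-Fuchs operator D applied to f. -/
noncomputable def D (f : PowerSeries ℚ) : PowerSeries ℚ :=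
  theta (theta (theta (theta f)))
    - (PowerSeries.X : PowerSeries ℚ) *
        (35 • theta (theta (theta (theta f))) + 70 • theta (theta (theta f))
          + 63 • theta (theta f) + 28 • theta f + 5 • f)
    + (PowerSeries.X : PowerSeries ℚ) ^ 2 *
        ((fun g => theta (theta g) + 2 • theta g + g)  -- (θ+1)²
          (259 • theta (theta f) + 518 • theta f + 285 • f))
    - 225 • ((PowerSeries.X : PowerSeries ℚ) ^ 3 *
        ((fun g => theta (theta g) + 2 • theta g + g)  -- (θ+1)²
          ((fun g => theta (theta g) + 4 • theta g + 4 • g)  -- (θ+2)²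
            f)))

open Finset

noncomputable def F (w : Fin 5 → ℕ) : ℚ := ((Nat.multinomial Finset.univ w : ℕ) : ℚ) ^ 2

lemma key_nat (v : Fin 5 → ℕ) (i : Fin 5) :
    Nat.multinomial Finset.univ (Function.update v i (v i + 1)) * (v i + 1)
      = Nat.multinomial Finset.univ v * ((∑ j, v j) + 1) := by
  have hpos : 0 < ∏ j, (v j).factorial := Finset.prod_pos fun _ _ => Nat.factorial_pos _
  apply Nat.eq_of_mul_eq_mul_left hpos
  have hre : ∏ j ∈ Finset.univ.erase i, (Function.update v i (v i + 1) j).factorial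
      = ∏ j ∈ Finset.univ.erase i, (v j).factorial :=
    Finset.prod_congr rfl fun j hj => by
      rw [Function.update_of_ne (Finset.ne_of_mem_erase hj)]
  have hprod : (∏ j, (Function.update v i (v i + 1) j).factorial)
      = (v i + 1) * ∏ j, (v j).factorial := by
    calc (∏ j, (Function.update v i (v i + 1) j).factorial)
        = (Function.update v i (v i + 1) i).factorial
            * ∏ j ∈ Finset.univ.erase i, (Function.update v i (v i + 1) j).factorial :=
          (Finset.mul_prod_erase _ _ (Finset.mem_univ i)).symm
      _ = (v i + 1) * ((v i).factorial * ∏ j ∈ Finset.univ.erase i, (v j).factorial) := by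
          rw [Function.update_self, hre, Nat.factorial_succ, mul_assoc]
      _ = (v i + 1) * ∏ j, (v j).factorial := by
          congr 1
          exact Finset.mul_prod_erase _ (fun j => (v j).factorial) (Finset.mem_univ i)
  have hre' : ∑ j ∈ Finset.univ.erase i, Function.update v i (v i + 1) j
      = ∑ j ∈ Finset.univ.erase i, v j :=
    Finset.sum_congr rfl fun j hj => by
      rw [Function.update_of_ne (Finset.ne_of_mem_erase hj)]
  have hsum : (∑ j, Function.update v i (v i + 1) j) = (∑ j, v j) + 1 := by
    calc (∑ j, Function.update v i (v i + 1) j)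
        = Function.update v i (v i + 1) i
            + ∑ j ∈ Finset.univ.erase i, Function.update v i (v i + 1) j :=
          (Finset.add_sum_erase _ _ (Finset.mem_univ i)).symm
      _ = (v i + 1) + ∑ j ∈ Finset.univ.erase i, v j := by rw [Function.update_self, hre']
      _ = (v i + ∑ j ∈ Finset.univ.erase i, v j) + 1 := by ring
      _ = (∑ j, v j) + 1 := by
          congr 1
          exact Finset.add_sum_erase _ v (Finset.mem_univ i)
  have h1 := Nat.multinomial_spec Finset.univ (Function.update v i (v i + 1))
  have h2 := Nat.multinomial_spec Finset.univ v
  calc (∏ j, (v j).factorial)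
        * (Nat.multinomial Finset.univ (Function.update v i (v i + 1)) * (v i + 1))
      = (∏ j, (Function.update v i (v i + 1) j).factorial)
          * Nat.multinomial Finset.univ (Function.update v i (v i + 1)) := by rw [hprod]; ring
    _ = (∑ j, Function.update v i (v i + 1) j).factorial := h1
    _ = ((∑ j, v j) + 1).factorial := by rw [hsum]
    _ = ((∑ j, v j) + 1) * (∑ j, v j).factorial := Nat.factorial_succ _
    _ = ((∑ j, v j) + 1) * ((∏ j, (v j).factorial) * Nat.multinomial Finset.univ v) := by rw [h2]
    _ = (∏ j, (v j).factorial) * (Nat.multinomial Finset.univ v * ((∑ j, v j) + 1)) := by ring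

lemma keyF {m : ℕ} {v : Fin 5 → ℕ} (hv : (∑ j, v j) = m) (i : Fin 5) :
    F (Function.update v i (v i + 1)) * ((v i : ℚ) + 1) ^ 2 = ((m : ℚ) + 1) ^ 2 * F v := by
  have h := key_nat v i
  rw [hv] at h
  have hc : ((Nat.multinomial Finset.univ (Function.update v i (v i + 1)) : ℚ)) * ((v i : ℚ) + 1)
      = (Nat.multinomial Finset.univ v : ℚ) * ((m : ℚ) + 1) := by exact_mod_cast h
  simp only [F]
  linear_combination ((Nat.multinomial Finset.univ (Function.update v i (v i + 1)) : ℚ) * ((v i : ℚ) + 1)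
    + (Nat.multinomial Finset.univ v : ℚ) * ((m : ℚ) + 1)) * hc

lemma push (m : ℕ) (i : Fin 5) (g : (Fin 5 → ℕ) → ℚ) :
    ∑ w ∈ Finset.Nat.antidiagonalTuple 5 (m + 1), F w * ((w i : ℚ)) ^ 2 * g w
      = ((m : ℚ) + 1) ^ 2
          * ∑ v ∈ Finset.Nat.antidiagonalTuple 5 m, F v * g (Function.update v i (v i + 1)) := by
  classical
  rw [Finset.mul_sum]
  rw [← Finset.sum_filter_of_ne (p := fun w => w i ≠ 0)
      (fun w _ hne h0 => hne (by rw [h0]; push_cast; ring))]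
  refine (Finset.sum_nbij' (fun v => Function.update v i (v i + 1))
      (fun w => Function.update w i (w i - 1)) ?_ ?_ ?_ ?_ ?_).symm
  · intro v hv
    rw [Finset.Nat.mem_antidiagonalTuple] at hv
    simp only [Finset.mem_filter, Finset.Nat.mem_antidiagonalTuple]
    have hs : (∑ j, Function.update v i (v i + 1) j) = (∑ j, v j) + 1 := by
      rw [Finset.sum_update_of_mem (Finset.mem_univ i)]
      have h2 : v i + ∑ j ∈ Finset.univ.erase i, v j = ∑ j, v j :=
        Finset.add_sum_erase _ v (Finset.mem_univ i)
      rw [Finset.erase_eq] at h2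
      omega
    refine ⟨by rw [hs, hv], ?_⟩
    simp [Function.update_self]
  · intro w hw
    simp only [Finset.mem_filter, Finset.Nat.mem_antidiagonalTuple] at hw
    rw [Finset.Nat.mem_antidiagonalTuple]
    rw [Finset.sum_update_of_mem (Finset.mem_univ i)]
    have h2 : w i + ∑ j ∈ Finset.univ.erase i, w j = ∑ j, w j :=
      Finset.add_sum_erase _ w (Finset.mem_univ i)
    rw [Finset.erase_eq] at h2
    omega
  · intro v _
    funext k
    by_cases hk : k = i
    · subst hk
      simp [Function.update_self]
    · simp [Function.update_of_ne hk]
  · intro w hw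
    simp only [Finset.mem_filter] at hw
    funext k
    by_cases hk : k = i
    · subst hk
      have h0 : w k ≠ 0 := hw.2
      simp only [Function.update_self]
      omega
    · simp [Function.update_of_ne hk]
  · intro v hv
    rw [Finset.Nat.mem_antidiagonalTuple] at hv
    have hk := keyF hv i
    rw [Function.update_self]
    push_cast
    linear_combination (-g (Function.update v i (v i + 1))) * hk

lemma push0 (m : ℕ) (g : ℚ → ℚ → ℚ → ℚ → ℚ → ℚ) :
    ∑ w ∈ Finset.Nat.antidiagonalTuple 5 (m + 1),
        F w * ((w 0 : ℚ)) ^ 2 * g (w 0) (w 1) (w 2) (w 3) (w 4)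
      = ((m : ℚ) + 1) ^ 2
          * ∑ v ∈ Finset.Nat.antidiagonalTuple 5 m, F v * g ((v 0 : ℚ) + 1) (v 1 : ℚ) (v 2 : ℚ) (v 3 : ℚ) (v 4 : ℚ) := by
  have h := push m 0 (fun w => g (w 0) (w 1) (w 2) (w 3) (w 4))
  simp only [Function.update_apply, (show (1 : Fin 5) ≠ 0 by decide), (show (2 : Fin 5) ≠ 0 by decide), (show (3 : Fin 5) ≠ 0 by decide), (show (4 : Fin 5) ≠ 0 by decide)] at h
  push_cast at h
  convert h using 1

lemma push1 (m : ℕ) (g : ℚ → ℚ → ℚ → ℚ → ℚ → ℚ) :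
    ∑ w ∈ Finset.Nat.antidiagonalTuple 5 (m + 1),
        F w * ((w 1 : ℚ)) ^ 2 * g (w 0) (w 1) (w 2) (w 3) (w 4)
      = ((m : ℚ) + 1) ^ 2
          * ∑ v ∈ Finset.Nat.antidiagonalTuple 5 m, F v * g (v 0 : ℚ) ((v 1 : ℚ) + 1) (v 2 : ℚ) (v 3 : ℚ) (v 4 : ℚ) := by
  have h := push m 1 (fun w => g (w 0) (w 1) (w 2) (w 3) (w 4))
  simp only [Function.update_apply, (show (0 : Fin 5) ≠ 1 by decide), (show (2 : Fin 5) ≠ 1 by decide), (show (3 : Fin 5) ≠ 1 by decide), (show (4 : Fin 5) ≠ 1 by decide)] at h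
  push_cast at h
  convert h using 1

lemma push2 (m : ℕ) (g : ℚ → ℚ → ℚ → ℚ → ℚ → ℚ) :
    ∑ w ∈ Finset.Nat.antidiagonalTuple 5 (m + 1),
        F w * ((w 2 : ℚ)) ^ 2 * g (w 0) (w 1) (w 2) (w 3) (w 4)
      = ((m : ℚ) + 1) ^ 2
          * ∑ v ∈ Finset.Nat.antidiagonalTuple 5 m, F v * g (v 0 : ℚ) (v 1 : ℚ) ((v 2 : ℚ) + 1) (v 3 : ℚ) (v 4 : ℚ) := by
  have h := push m 2 (fun w => g (w 0) (w 1) (w 2) (w 3) (w 4))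
  simp only [Function.update_apply, (show (0 : Fin 5) ≠ 2 by decide), (show (1 : Fin 5) ≠ 2 by decide), (show (3 : Fin 5) ≠ 2 by decide), (show (4 : Fin 5) ≠ 2 by decide)] at h
  push_cast at h
  convert h using 1

lemma push3 (m : ℕ) (g : ℚ → ℚ → ℚ → ℚ → ℚ → ℚ) :
    ∑ w ∈ Finset.Nat.antidiagonalTuple 5 (m + 1),
        F w * ((w 3 : ℚ)) ^ 2 * g (w 0) (w 1) (w 2) (w 3) (w 4)
      = ((m : ℚ) + 1) ^ 2
          * ∑ v ∈ Finset.Nat.antidiagonalTuple 5 m, F v * g (v 0 : ℚ) (v 1 : ℚ) (v 2 : ℚ) ((v 3 : ℚ) + 1) (v 4 : ℚ) := by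
  have h := push m 3 (fun w => g (w 0) (w 1) (w 2) (w 3) (w 4))
  simp only [Function.update_apply, (show (0 : Fin 5) ≠ 3 by decide), (show (1 : Fin 5) ≠ 3 by decide), (show (2 : Fin 5) ≠ 3 by decide), (show (4 : Fin 5) ≠ 3 by decide)] at h
  push_cast at h
  convert h using 1

lemma push4 (m : ℕ) (g : ℚ → ℚ → ℚ → ℚ → ℚ → ℚ) :
    ∑ w ∈ Finset.Nat.antidiagonalTuple 5 (m + 1),
        F w * ((w 4 : ℚ)) ^ 2 * g (w 0) (w 1) (w 2) (w 3) (w 4)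
      = ((m : ℚ) + 1) ^ 2
          * ∑ v ∈ Finset.Nat.antidiagonalTuple 5 m, F v * g (v 0 : ℚ) (v 1 : ℚ) (v 2 : ℚ) (v 3 : ℚ) ((v 4 : ℚ) + 1) := by
  have h := push m 4 (fun w => g (w 0) (w 1) (w 2) (w 3) (w 4))
  simp only [Function.update_apply, (show (0 : Fin 5) ≠ 4 by decide), (show (1 : Fin 5) ≠ 4 by decide), (show (2 : Fin 5) ≠ 4 by decide), (show (3 : Fin 5) ≠ 4 by decide)] at h
  push_cast at h
  convert h using 1

lemma rep1 (m : ℕ) (i : Fin 5) :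
    ∑ w ∈ Finset.Nat.antidiagonalTuple 5 (m + 1), F w * ((w i : ℚ)) ^ 2
      = ((m : ℚ) + 1) ^ 2 * a m := by
  have h := push m i (fun _ => (1 : ℚ))
  simpa only [mul_one, a, F] using h

lemma rep2g (m : ℕ) (i j : Fin 5) (hij : j ≠ i) :
    ∑ w ∈ Finset.Nat.antidiagonalTuple 5 (m + 2), F w * ((w i : ℚ)) ^ 2 * ((w j : ℚ)) ^ 2
      = ((m : ℚ) + 2) ^ 2 * ((m : ℚ) + 1) ^ 2 * a m := by
  have h := push (m + 1) i (fun w => ((w j : ℚ)) ^ 2)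
  rw [show m + 1 + 1 = m + 2 by omega] at h
  simp only [Function.update_of_ne hij] at h
  rw [rep1 m j] at h
  exact h.trans (by push_cast; ring)

lemma rep3 (m : ℕ) :
    ∑ w ∈ Finset.Nat.antidiagonalTuple 5 (m + 3),
        F w * ((w 0 : ℚ)) ^ 2 * (((w 1 : ℚ)) ^ 2 * ((w 2 : ℚ)) ^ 2)
      = ((m : ℚ) + 3) ^ 2 * ((m : ℚ) + 2) ^ 2 * ((m : ℚ) + 1) ^ 2 * a m := by
  have h := push (m + 2) 0 (fun w => ((w 1 : ℚ)) ^ 2 * ((w 2 : ℚ)) ^ 2)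
  rw [show m + 2 + 1 = m + 3 by omega] at h
  simp only [Function.update_of_ne (show (1 : Fin 5) ≠ 0 by decide),
    Function.update_of_ne (show (2 : Fin 5) ≠ 0 by decide)] at h
  have h2 : ∑ v ∈ Finset.Nat.antidiagonalTuple 5 (m + 2),
      F v * (((v 1 : ℚ)) ^ 2 * ((v 2 : ℚ)) ^ 2)
      = ∑ v ∈ Finset.Nat.antidiagonalTuple 5 (m + 2), F v * ((v 1 : ℚ)) ^ 2 * ((v 2 : ℚ)) ^ 2 :=
    Finset.sum_congr rfl fun v _ => by ring
  rw [h2, rep2g m 1 2 (by decide)] at h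
  exact h.trans (by push_cast; ring)

lemma repz2 : ∑ w ∈ Finset.Nat.antidiagonalTuple 5 1,
    F w * ((w 0 : ℚ)) ^ 2 * ((w 1 : ℚ)) ^ 2 = 0 := by
  refine Finset.sum_eq_zero fun w hw => ?_
  rw [Finset.Nat.mem_antidiagonalTuple, Fin.sum_univ_five] at hw
  have h : w 0 = 0 ∨ w 1 = 0 := by omega
  rcases h with h | h <;> simp [h]

lemma repz3a : ∑ w ∈ Finset.Nat.antidiagonalTuple 5 1,
    F w * ((w 0 : ℚ)) ^ 2 * (((w 1 : ℚ)) ^ 2 * ((w 2 : ℚ)) ^ 2) = 0 := by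
  refine Finset.sum_eq_zero fun w hw => ?_
  rw [Finset.Nat.mem_antidiagonalTuple, Fin.sum_univ_five] at hw
  have h : w 0 = 0 ∨ w 1 = 0 := by omega
  rcases h with h | h <;> simp [h]

lemma repz3b : ∑ w ∈ Finset.Nat.antidiagonalTuple 5 2,
    F w * ((w 0 : ℚ)) ^ 2 * (((w 1 : ℚ)) ^ 2 * ((w 2 : ℚ)) ^ 2) = 0 := by
  refine Finset.sum_eq_zero fun w hw => ?_
  rw [Finset.Nat.mem_antidiagonalTuple, Fin.sum_univ_five] at hw
  have h : w 0 = 0 ∨ w 1 = 0 ∨ w 2 = 0 := by omega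
  rcases h with h | h | h <;> simp [h]
noncomputable def g01 (x0 x1 x2 x3 x4 : ℚ) : ℚ :=
  (-5) + (28)*x4 + (-63)*x4^2 + (70)*x4^3 + (-20)*x4^4 + (28)*x3 + (-126)*x3*x4 + (210)*x3*x4^2 + (-80)*x3*x4^3 + (-63)*x3^2 + (210)*x3^2*x4 + (-120)*x3^2*x4^2 + (70)*x3^3 + (-80)*x3^3*x4 + (-20)*x3^4 + (28)*x2 + (-126)*x2*x4 + (210)*x2*x4^2 + (-80)*x2*x4^3 + (-126)*x2*x3 + (420)*x2*x3*x4 + (-240)*x2*x3*x4^2 + (210)*x2*x3^2 + (-240)*x2*x3^2*x4 + (-80)*x2*x3^3 + (-63)*x2^2 + (210)*x2^2*x4 + (-120)*x2^2*x4^2 + (210)*x2^2*x3 + (-240)*x2^2*x3*x4 + (-120)*x2^2*x3^2 + (70)*x2^3 + (-80)*x2^3*x4 + (-80)*x2^3*x3 + (-20)*x2^4 + (28)*x1 + (-126)*x1*x4 + (210)*x1*x4^2 + (-80)*x1*x4^3 + (-126)*x1*x3 + (420)*x1*x3*x4 + (-240)*x1*x3*x4^2 + (210)*x1*x3^2 +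 (-240)*x1*x3^2*x4 + (-80)*x1*x3^3 + (-126)*x1*x2 + (420)*x1*x2*x4 + (-240)*x1*x2*x4^2 + (420)*x1*x2*x3 + (-480)*x1*x2*x3*x4 + (-240)*x1*x2*x3^2 + (210)*x1*x2^2 + (-240)*x1*x2^2*x4 + (-240)*x1*x2^2*x3 + (-80)*x1*x2^3 + (387)*x1^2 + (-110)*x1^2*x4 + (-56)*x1^2*x4^2 + (-110)*x1^2*x3 + (-112)*x1^2*x3*x4 + (-56)*x1^2*x3^2 + (-110)*x1^2*x2 + (-112)*x1^2*x2*x4 + (-112)*x1^2*x2*x3 + (-281)*x1^2*x2^2 + (-700)*x1^3 + (48)*x1^3*x4 + (48)*x1^3*x3 + (48)*x1^3*x2 + (269)*x1^4 + (28)*x0 + (-126)*x0*x4 + (210)*x0*x4^2 + (-120)*x0*x4^3 + (-126)*x0*x3 + (420)*x0*x3*x4 + (-360)*x0*x3*x4^2 + (210)*x0*x3^2 + (-360)*x0*x3^2*x4 + (-120)*x0*x3^3 + (-126)*x0*x2 + (420)*x0*x2*x4 + (-360)*x0*x2*x4^2 + (420)*x0*x2*x3 + (-720)*x0*x2*x3*x4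 + (-360)*x0*x2*x3^2 + (210)*x0*x2^2 + (-360)*x0*x2^2*x4 + (-360)*x0*x2^2*x3 + (-120)*x0*x2^3 + (-126)*x0*x1 + (420)*x0*x1*x4 + (-360)*x0*x1*x4^2 + (420)*x0*x1*x3 + (-720)*x0*x1*x3*x4 + (-360)*x0*x1*x3^2 + (420)*x0*x1*x2 + (-720)*x0*x1*x2*x4 + (-720)*x0*x1*x2*x3 + (-360)*x0*x1*x2^2 + (-240)*x0*x1^2 + (24)*x0*x1^2*x4 + (24)*x0*x1^2*x3 + (24)*x0*x1^2*x2 + (264)*x0*x1^3 + (-63)*x0^2 + (210)*x0^2*x4 + (-195)*x0^2*x4^2 + (210)*x0^2*x3 + (-390)*x0^2*x3*x4 + (-195)*x0^2*x3^2 + (210)*x0^2*x2 + (-390)*x0^2*x2*x4 + (-390)*x0^2*x2*x3 + (-195)*x0^2*x2^2 + (210)*x0^2*x1 + (-390)*x0^2*x1*x4 + (-390)*x0^2*x1*x3 + (-390)*x0^2*x1*x2 + (30)*x0^2*x1^2 + (70)*x0^3 + (-134)*x0^3*x4 + (-134)*x0^3*x3 + (-134)*x0^3*x2 + (-134)*x0^3*x1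 + (-34)*x0^4

noncomputable def g12 (x0 x1 x2 x3 x4 : ℚ) : ℚ :=
  (900) + (-60)*x4 + (46)*x4^2 + (30)*x4^3 + (-5)*x4^4 + (-60)*x3 + (92)*x3*x4 + (90)*x3*x4^2 + (-20)*x3*x4^3 + (46)*x3^2 + (90)*x3^2*x4 + (-30)*x3^2*x4^2 + (30)*x3^3 + (-20)*x3^3*x4 + (-5)*x3^4 + (-60)*x2 + (92)*x2*x4 + (90)*x2*x4^2 + (-20)*x2*x4^3 + (92)*x2*x3 + (180)*x2*x3*x4 + (-60)*x2*x3*x4^2 + (90)*x2*x3^2 + (-60)*x2*x3^2*x4 + (-20)*x2*x3^3 + (76)*x2^2 + (104)*x2^2*x4 + (-71)*x2^2*x4^2 + (104)*x2^2*x3 + (-142)*x2^2*x3*x4 + (-71)*x2^2*x3^2 + (-46)*x2^3 + (-102)*x2^3*x4 + (-102)*x2^3*x3 + (-1)*x2^4 + (-2760)*x1 + (220)*x1*x4 + (-38)*x1*x4^2 + (-60)*x1*x4^3 + (220)*x1*x3 + (-76)*x1*x3*x4 + (-180)*x1*x3*x4^2 + (-38)*x1*x3^2 + (-180)*x1*x3^2*x4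 + (-60)*x1*x3^3 + (220)*x1*x2 + (-76)*x1*x2*x4 + (-180)*x1*x2*x4^2 + (-76)*x1*x2*x3 + (-360)*x1*x2*x3*x4 + (-180)*x1*x2*x3^2 + (-74)*x1*x2^2 + (-126)*x1*x2^2*x4 + (-126)*x1*x2^2*x3 + (-6)*x1*x2^3 + (3099)*x1^2 + (-230)*x1^2*x4 + (-41)*x1^2*x4^2 + (-230)*x1^2*x3 + (-82)*x1^2*x3*x4 + (-41)*x1^2*x3^2 + (-230)*x1^2*x2 + (-82)*x1^2*x2*x4 + (-82)*x1^2*x2*x3 + (4)*x1^2*x2^2 + (-1512)*x1^3 + (54)*x1^3*x4 + (54)*x1^3*x3 + (54)*x1^3*x2 + (270)*x1^4 + (-360)*x0 + (276)*x0*x4 + (180)*x0*x4^2 + (-60)*x0*x4^3 + (276)*x0*x3 + (360)*x0*x3*x4 + (-180)*x0*x3*x4^2 + (180)*x0*x3^2 + (-180)*x0*x3^2*x4 + (-60)*x0*x3^3 + (276)*x0*x2 + (360)*x0*x2*x4 + (-180)*x0*x2*x4^2 + (360)*x0*x2*x3 + (-360)*x0*x2*x3*x4 + (-180)*x0*x2*x3^2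 + (-36)*x0*x2^2 + (-126)*x0*x2^2*x4 + (-126)*x0*x2^2*x3 + (-6)*x0*x2^3 + (1044)*x0*x1 + (-408)*x0*x1*x4 + (-300)*x0*x1*x4^2 + (-408)*x0*x1*x3 + (-600)*x0*x1*x3*x4 + (-300)*x0*x1*x3^2 + (-408)*x0*x1*x2 + (-600)*x0*x1*x2*x4 + (-600)*x0*x1*x2*x3 + (-30)*x0*x1*x2^2 + (-972)*x0*x1^2 + (54)*x0*x1^2*x4 + (54)*x0*x1^2*x3 + (54)*x0*x1^2*x2 + (270)*x0*x1^3

noncomputable def g23 (x0 x1 x2 x3 x4 : ℚ) : ℚ :=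
  (70) + (130)*x4 + (-14)*x4^2 + (-10)*x4^3 + (10)*x4^4 + (130)*x3 + (-28)*x3*x4 + (-30)*x3*x4^2 + (40)*x3*x4^3 + (-54)*x3^2 + (78)*x3^2*x4 + (4)*x3^2*x4^2 + (98)*x3^3 + (-72)*x3^3*x4 + (-46)*x3^4 + (-180)*x2 + (-328)*x2*x4 + (52)*x2*x4^2 + (-328)*x2*x3 + (104)*x2*x3*x4 + (100)*x2*x3^2 + (-96)*x2*x3^2*x4 + (-96)*x2*x3^3 + (156)*x2^2 + (284)*x2^2*x4 + (-56)*x2^2*x4^2 + (284)*x2^2*x3 + (-112)*x2^2*x3*x4 + (-56)*x2^2*x3^2 + (-48)*x2^3 + (-96)*x2^3*x4 + (-96)*x2^3*x3 + (36)*x1*x4 + (60)*x1*x4^2 + (36)*x1*x3 + (120)*x1*x3*x4 + (108)*x1*x3^2 + (-96)*x1*x3^2*x4 + (-96)*x1*x3^3 + (36)*x1*x2 + (12)*x1*x2*x4 + (-120)*x1*x2*x4^2 + (12)*x1*x2*x3 + (-240)*x1*x2*x3*x4 + (-120)*x1*x2*x3^2 + (-48)*x1*x2^2 + (-96)*x1*x2^2*x4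 + (-96)*x1*x2^2*x3 + (36)*x0*x4 + (60)*x0*x4^2 + (36)*x0*x3 + (120)*x0*x3*x4 + (108)*x0*x3^2 + (-96)*x0*x3^2*x4 + (-96)*x0*x3^3 + (36)*x0*x2 + (12)*x0*x2*x4 + (-120)*x0*x2*x4^2 + (12)*x0*x2*x3 + (-240)*x0*x2*x3*x4 + (-120)*x0*x2*x3^2 + (-48)*x0*x2^2 + (-96)*x0*x2^2*x4 + (-96)*x0*x2^2*x3 + (180)*x0*x1 + (300)*x0*x1*x4 + (-120)*x0*x1*x4^2 + (300)*x0*x1*x3 + (-240)*x0*x1*x3*x4 + (-120)*x0*x1*x3^2 + (-240)*x0*x1*x2 + (-480)*x0*x1*x2*x4 + (-480)*x0*x1*x2*x3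

noncomputable def g34 (x0 x1 x2 x3 x4 : ℚ) : ℚ :=
  (-50) + (80)*x4 + (-14)*x4^2 + (2)*x4^3 + (-1)*x4^4 + (200)*x3 + (-216)*x3*x4 + (34)*x3*x4^2 + (-6)*x3*x4^3 + (-292)*x3^2 + (198)*x3^2*x4 + (-26)*x3^2*x4^2 + (186)*x3^3 + (-66)*x3^3*x4 + (-45)*x3^4 + (120)*x2 + (-24)*x2*x4 + (12)*x2*x4^2 + (-6)*x2*x4^3 + (-312)*x2*x3 + (72)*x2*x3*x4 + (-30)*x2*x3*x4^2 + (276)*x2*x3^2 + (-66)*x2*x3^2*x4 + (-90)*x2*x3^3 + (120)*x1 + (-24)*x1*x4 + (12)*x1*x4^2 + (-6)*x1*x4^3 + (-312)*x1*x3 + (72)*x1*x3*x4 + (-30)*x1*x3*x4^2 + (276)*x1*x3^2 + (-66)*x1*x3^2*x4 + (-90)*x1*x3^3 + (60)*x1*x2*x4 + (-30)*x1*x2*x4^2 + (60)*x1*x2*x3 + (-120)*x1*x2*x3*x4 + (-90)*x1*x2*x3^2 + (120)*x0 + (-24)*x0*x4 + (12)*x0*x4^2 + (-6)*x0*x4^3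 + (-312)*x0*x3 + (72)*x0*x3*x4 + (-30)*x0*x3*x4^2 + (276)*x0*x3^2 + (-66)*x0*x3^2*x4 + (-90)*x0*x3^3 + (60)*x0*x2*x4 + (-30)*x0*x2*x4^2 + (60)*x0*x2*x3 + (-120)*x0*x2*x3*x4 + (-90)*x0*x2*x3^2 + (60)*x0*x1*x4 + (-30)*x0*x1*x4^2 + (60)*x0*x1*x3 + (-120)*x0*x1*x3*x4 + (-90)*x0*x1*x3^2 + (240)*x0*x1*x2 + (-120)*x0*x1*x2*x4 + (-360)*x0*x1*x2*x3

noncomputable def Tq (x0 x1 x2 x3 x4 : ℚ) : ℚ :=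
  (x0+x1+x2+x3+x4)^6
  - (35*(x0+x1+x2+x3+x4)^4 - 70*(x0+x1+x2+x3+x4)^3 + 63*(x0+x1+x2+x3+x4)^2
      - 28*(x0+x1+x2+x3+x4) + 5) * x0^2
  + (259*(x0+x1+x2+x3+x4)^2 - 518*(x0+x1+x2+x3+x4) + 285) * x0^2*x1^2
  - 225 * x0^2*x1^2*x2^2

set_option maxHeartbeats 2000000 in
lemma cert_pointwise (x0 x1 x2 x3 x4 : ℚ) : Tq x0 x1 x2 x3 x4 =
    x0^2 * g01 x0 x1 x2 x3 x4 - x1^2 * g01 (x0+1) (x1-1) x2 x3 x4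
    + x1^2 * g12 x0 x1 x2 x3 x4 - x2^2 * g12 x0 (x1+1) (x2-1) x3 x4
    + x2^2 * g23 x0 x1 x2 x3 x4 - x3^2 * g23 x0 x1 (x2+1) (x3-1) x4
    + x3^2 * g34 x0 x1 x2 x3 x4 - x4^2 * g34 x0 x1 x2 (x3+1) (x4-1) := by
  simp only [Tq, g01, g12, g23, g34]
  ring

set_option maxHeartbeats 2000000 in
lemma certsum (m : ℕ) :
    ∑ w ∈ Finset.Nat.antidiagonalTuple 5 (m + 1),
      F w * Tq (w 0) (w 1) (w 2) (w 3) (w 4) = 0 := by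
  have e1 := push0 m (fun x0 x1 x2 x3 x4 => g01 x0 x1 x2 x3 x4)
  have e2 := push1 m (fun x0 x1 x2 x3 x4 => g01 (x0+1) (x1-1) x2 x3 x4)
  have e3 := push1 m (fun x0 x1 x2 x3 x4 => g12 x0 x1 x2 x3 x4)
  have e4 := push2 m (fun x0 x1 x2 x3 x4 => g12 x0 (x1+1) (x2-1) x3 x4)
  have e5 := push2 m (fun x0 x1 x2 x3 x4 => g23 x0 x1 x2 x3 x4)
  have e6 := push3 m (fun x0 x1 x2 x3 x4 => g23 x0 x1 (x2+1) (x3-1) x4)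
  have e7 := push3 m (fun x0 x1 x2 x3 x4 => g34 x0 x1 x2 x3 x4)
  have e8 := push4 m (fun x0 x1 x2 x3 x4 => g34 x0 x1 x2 (x3+1) (x4-1))
  simp only [add_sub_cancel_right] at e2 e4 e6 e8
  have hsplit : ∑ w ∈ Finset.Nat.antidiagonalTuple 5 (m + 1),
      F w * Tq (w 0) (w 1) (w 2) (w 3) (w 4)
      = ((∑ w ∈ Finset.Nat.antidiagonalTuple 5 (m + 1),
            F w * ((w 0 : ℚ))^2 * g01 (w 0) (w 1) (w 2) (w 3) (w 4))
        - ∑ w ∈ Finset.Nat.antidiagonalTuple 5 (m + 1),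
            F w * ((w 1 : ℚ))^2 * g01 ((w 0 : ℚ)+1) ((w 1 : ℚ)-1) (w 2) (w 3) (w 4))
        + ((∑ w ∈ Finset.Nat.antidiagonalTuple 5 (m + 1),
            F w * ((w 1 : ℚ))^2 * g12 (w 0) (w 1) (w 2) (w 3) (w 4))
        - ∑ w ∈ Finset.Nat.antidiagonalTuple 5 (m + 1),
            F w * ((w 2 : ℚ))^2 * g12 (w 0) ((w 1 : ℚ)+1) ((w 2 : ℚ)-1) (w 3) (w 4))
        + ((∑ w ∈ Finset.Nat.antidiagonalTuple 5 (m + 1),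
            F w * ((w 2 : ℚ))^2 * g23 (w 0) (w 1) (w 2) (w 3) (w 4))
        - ∑ w ∈ Finset.Nat.antidiagonalTuple 5 (m + 1),
            F w * ((w 3 : ℚ))^2 * g23 (w 0) (w 1) ((w 2 : ℚ)+1) ((w 3 : ℚ)-1) (w 4))
        + ((∑ w ∈ Finset.Nat.antidiagonalTuple 5 (m + 1),
            F w * ((w 3 : ℚ))^2 * g34 (w 0) (w 1) (w 2) (w 3) (w 4))
        - ∑ w ∈ Finset.Nat.antidiagonalTuple 5 (m + 1),
            F w * ((w 4 : ℚ))^2 * g34 (w 0) (w 1) (w 2) ((w 3 : ℚ)+1) ((w 4 : ℚ)-1)) := by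
    rw [← Finset.sum_sub_distrib, ← Finset.sum_sub_distrib, ← Finset.sum_sub_distrib,
      ← Finset.sum_sub_distrib, ← Finset.sum_add_distrib, ← Finset.sum_add_distrib,
      ← Finset.sum_add_distrib]
    refine Finset.sum_congr rfl fun w _ => ?_
    rw [cert_pointwise]
    ring
  rw [hsplit, e1, e2, e3, e4, e5, e6, e7, e8]
  ring

lemma master (m : ℕ) :
    ((m:ℚ)+1)^6 * a (m+1)
      - (35*((m:ℚ)+1)^4 - 70*((m:ℚ)+1)^3 + 63*((m:ℚ)+1)^2 - 28*((m:ℚ)+1) + 5)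
          * (∑ w ∈ Finset.Nat.antidiagonalTuple 5 (m+1), F w * ((w 0 : ℚ))^2)
      + (259*((m:ℚ)+1)^2 - 518*((m:ℚ)+1) + 285)
          * (∑ w ∈ Finset.Nat.antidiagonalTuple 5 (m+1), F w * ((w 0 : ℚ))^2 * ((w 1 : ℚ))^2)
      - 225 * (∑ w ∈ Finset.Nat.antidiagonalTuple 5 (m+1),
          F w * ((w 0 : ℚ))^2 * (((w 1 : ℚ))^2 * ((w 2 : ℚ))^2)) = 0 := by
  have hc := certsum m
  have hpt : ∀ w ∈ Finset.Nat.antidiagonalTuple 5 (m+1),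
      F w * Tq (w 0) (w 1) (w 2) (w 3) (w 4)
      = ((m:ℚ)+1)^6 * F w
        - (35*((m:ℚ)+1)^4 - 70*((m:ℚ)+1)^3 + 63*((m:ℚ)+1)^2 - 28*((m:ℚ)+1) + 5)
            * (F w * ((w 0 : ℚ))^2)
        + (259*((m:ℚ)+1)^2 - 518*((m:ℚ)+1) + 285) * (F w * ((w 0 : ℚ))^2 * ((w 1 : ℚ))^2)
        - 225 * (F w * ((w 0 : ℚ))^2 * (((w 1 : ℚ))^2 * ((w 2 : ℚ))^2)) := by
    intro w hw
    rw [Finset.Nat.mem_antidiagonalTuple, Fin.sum_univ_five] at hw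
    have hs : (w 0 : ℚ) + (w 1 : ℚ) + (w 2 : ℚ) + (w 3 : ℚ) + (w 4 : ℚ) = (m:ℚ)+1 := by
      exact_mod_cast congrArg (Nat.cast : ℕ → ℚ) hw
    simp only [Tq]
    rw [hs]
    ring
  rw [Finset.sum_congr rfl hpt] at hc
  rw [Finset.sum_sub_distrib, Finset.sum_add_distrib, Finset.sum_sub_distrib,
    ← Finset.mul_sum, ← Finset.mul_sum, ← Finset.mul_sum, ← Finset.mul_sum] at hc
  have ha : ∑ w ∈ Finset.Nat.antidiagonalTuple 5 (m+1), F w = a (m+1) := rfl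
  rw [ha] at hc
  exact hc

lemma coeff_theta (k : ℕ) (f : PowerSeries ℚ) :
    PowerSeries.coeff k (theta f) = (k : ℚ) * PowerSeries.coeff k f := by
  simp [theta]

lemma coeff_nsmul' (c k : ℕ) (f : PowerSeries ℚ) :
    PowerSeries.coeff k (c • f) = (c : ℚ) * PowerSeries.coeff k f := by
  rw [← Nat.cast_smul_eq_nsmul ℚ, map_smul, smul_eq_mul]

lemma coeff_X_mul'' (d : ℕ) (G : PowerSeries ℚ) :
    PowerSeries.coeff d ((PowerSeries.X : PowerSeries ℚ) * G)
      = if 1 ≤ d then PowerSeries.coeff (d - 1) G else 0 := by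
  rw [← pow_one (PowerSeries.X : PowerSeries ℚ), PowerSeries.coeff_X_pow_mul']

lemma coeff_pi0 (k : ℕ) : PowerSeries.coeff k pi0 = a k := by simp [pi0]

lemma constantCoeff_theta (f : PowerSeries ℚ) :
    PowerSeries.constantCoeff (theta f) = 0 := by
  have : PowerSeries.constantCoeff (theta f) = PowerSeries.coeff 0 (theta f) := by
    rw [PowerSeries.coeff_zero_eq_constantCoeff]
  rw [this, coeff_theta]
  norm_num

theorem picard_fuchs_annihilates_pi0 : D pi0 = 0 := by
  refine PowerSeries.ext fun n => ?_
  rw [map_zero]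
  match n with
  | 0 =>
    simp [D, coeff_nsmul', coeff_theta, coeff_X_mul'', PowerSeries.coeff_X_pow_mul', coeff_pi0,
      constantCoeff_theta]
  | 1 =>
    simp only [D, map_sub, map_add, coeff_nsmul', coeff_theta, coeff_X_mul'',
      PowerSeries.coeff_X_pow_mul', coeff_pi0]
    norm_num
    have hM := master 0
    have h1 := rep1 0 0
    rw [show (0:ℕ)+1 = 1 from rfl] at hM h1
    have h2 := repz2
    have h3 := repz3a
    push_cast at hM h1 ⊢
    norm_num at hM h1
    linear_combination hM + 5*h1 - 26*h2 + 225*h3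
  | 2 =>
    simp only [D, map_sub, map_add, coeff_nsmul', coeff_theta, coeff_X_mul'',
      PowerSeries.coeff_X_pow_mul', coeff_pi0]
    norm_num
    have hM := master 1
    have h1 := rep1 1 0
    rw [show (1:ℕ)+1 = 2 from rfl] at hM h1
    have h2 := rep2g 0 0 1 (by decide)
    rw [show (0:ℕ)+2 = 2 from rfl] at h2
    have h3 := repz3b
    push_cast at hM h1 h2 ⊢
    norm_num at hM h1 h2
    linear_combination (hM + 201*h1 - 285*h2 + 225*h3)/4
  | (m+3) =>
    simp only [D, map_sub, map_add, coeff_nsmul', coeff_theta, coeff_X_mul'',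
      PowerSeries.coeff_X_pow_mul', coeff_pi0,
      show (1:ℕ) ≤ m+3 by omega, show (2:ℕ) ≤ m+3 by omega, show (3:ℕ) ≤ m+3 by omega,
      if_true, show m+3-1 = m+2 by omega, show m+3-2 = m+1 by omega, show m+3-3 = m by omega]
    have hM := master (m+2)
    have h1 := rep1 (m+2) 0
    rw [show m+2+1 = m+3 by omega] at hM h1
    have h2 := rep2g (m+1) 0 1 (by decide)
    rw [show m+1+2 = m+3 by omega] at h2
    have h3 := rep3 m
    have hnz : ((m:ℚ)+3)^2 ≠ 0 := by positivity
    apply mul_left_cancel₀ hnz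
    rw [mul_zero]
    push_cast at hM h1 h2 h3 ⊢
    linear_combination hM
      + (35*((m:ℚ)+3)^4 - 70*((m:ℚ)+3)^3 + 63*((m:ℚ)+3)^2 - 28*((m:ℚ)+3) + 5) * h1
      - (259*((m:ℚ)+3)^2 - 518*((m:ℚ)+3) + 285) * h2
      + 225 * h3
end
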